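/- Let (X,d) be a metric space, let a_1,…,a_{n_a} (outlier points), c_1,…,c_{n_c} (clean points), and y_1,…,y_N be points of X with n_a, n_c, N ≥ 1, and set γ = n_a/(n_a+n_c). Let p_a, p_c be the uniform vectors on the outlier and clean points, let p_X be the uniform vector on all n_a+n_c points, and let q ∈ Δ^N be the uniform vector on y_1,…,y_N. Then for every ρ ≥ 0 and every β ∈ [0,1] satisfying (β−γ)² ≤ 2ργ(1−γ): W^rob_{ρ,0}(p_X, q) ≤ β·W(p_a, q) + (1−β)·W(p_c, q). (Proof idea: the mixture β·π_a* + (1−β)·π_c* of optimal couplings is a feasible coupling for the relaxed marginal β·p_a + (1−β)·p_c.) -/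

import Mathlib

open Finset

/-- Discrete optimal transport cost between weighted point configurations. -/
noncomputable def discreteW {X : Type*} [MetricSpace X] {M N : ℕ}
    (x : Fin M → X) (y : Fin N → X) (p : Fin M → ℝ) (q : Fin N → ℝ) : ℝ :=
  sInf { c : ℝ | ∃ π : Fin M → Fin N → ℝ,
    (∀ i j, 0 ≤ π i j) ∧ (∀ i, ∑ j, π i j = p i) ∧ (∀ j, ∑ i, π i j = q j) ∧
    c = ∑ i, ∑ j, π i j * dist (x i) (y j) }

/-- `p` is a probability vector. -/
def IsProbVec {M : ℕ} (p : Fin M → ℝ) : Prop := (∀ i, 0 ≤ p i) ∧ ∑ i, p i = 1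

/-- χ²-divergence between probability vectors, with generator f(t) = (t-1)²/2. -/
noncomputable def chiSqDiv {M : ℕ} (pt p : Fin M → ℝ) : ℝ :=
  ∑ i, p i * ((pt i / p i - 1) ^ 2 / 2)

/-- Robust optimal transport cost with marginal χ²-relaxation budgets ρ₁, ρ₂. -/
noncomputable def robustW {X : Type*} [MetricSpace X] {M N : ℕ}
    (x : Fin M → X) (y : Fin N → X) (p : Fin M → ℝ) (q : Fin N → ℝ) (ρ₁ ρ₂ : ℝ) : ℝ :=
  sInf { c : ℝ | ∃ pt qt, IsProbVec pt ∧ IsProbVec qt ∧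
    chiSqDiv pt p ≤ ρ₁ ∧ chiSqDiv qt q ≤ ρ₂ ∧ c = discreteW x y pt qt }

/-! ### Auxiliary lemmas -/

/-- The set of coupling costs. -/
def Wset {X : Type*} [MetricSpace X] {M N : ℕ}
    (x : Fin M → X) (y : Fin N → X) (p : Fin M → ℝ) (q : Fin N → ℝ) : Set ℝ :=
  { c : ℝ | ∃ π : Fin M → Fin N → ℝ,
    (∀ i j, 0 ≤ π i j) ∧ (∀ i, ∑ j, π i j = p i) ∧ (∀ j, ∑ i, π i j = q j) ∧
    c = ∑ i, ∑ j, π i j * dist (x i) (y j) }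

lemma discreteW_eq_sInf_Wset {X : Type*} [MetricSpace X] {M N : ℕ}
    (x : Fin M → X) (y : Fin N → X) (p : Fin M → ℝ) (q : Fin N → ℝ) :
    discreteW x y p q = sInf (Wset x y p q) := rfl

lemma Wset_nonneg {X : Type*} [MetricSpace X] {M N : ℕ}
    {x : Fin M → X} {y : Fin N → X} {p : Fin M → ℝ} {q : Fin N → ℝ}
    {cst : ℝ} (h : cst ∈ Wset x y p q) : 0 ≤ cst := by
  obtain ⟨π, hpos, -, -, rfl⟩ := h
  exact Finset.sum_nonneg fun i _ => Finset.sum_nonneg fun j _ =>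
    mul_nonneg (hpos i j) dist_nonneg

lemma Wset_bddBelow {X : Type*} [MetricSpace X] {M N : ℕ}
    (x : Fin M → X) (y : Fin N → X) (p : Fin M → ℝ) (q : Fin N → ℝ) :
    BddBelow (Wset x y p q) := ⟨0, fun _ hc => Wset_nonneg hc⟩

lemma Wset_nonempty {X : Type*} [MetricSpace X] {M N : ℕ}
    (x : Fin M → X) (y : Fin N → X) {p : Fin M → ℝ} {q : Fin N → ℝ}
    (hp : IsProbVec p) (hq : IsProbVec q) : (Wset x y p q).Nonempty := by
  refine ⟨_, ⟨fun i j => p i * q j, fun i j => mul_nonneg (hp.1 i) (hq.1 j), ?_, ?_, rfl⟩⟩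
  · intro i; rw [← Finset.mul_sum, hq.2, mul_one]
  · intro j; rw [← Finset.sum_mul, hp.2, one_mul]

lemma discreteW_nonneg {X : Type*} [MetricSpace X] {M N : ℕ}
    (x : Fin M → X) (y : Fin N → X) {p : Fin M → ℝ} {q : Fin N → ℝ}
    (hp : IsProbVec p) (hq : IsProbVec q) : 0 ≤ discreteW x y p q :=
  le_csInf (Wset_nonempty x y hp hq) fun _ hc => Wset_nonneg hc

theorem robustW_mixture_bound {X : Type*} [MetricSpace X] {na nc N : ℕ}
    (hna : 1 ≤ na) (hnc : 1 ≤ nc) (hN : 1 ≤ N)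
    (a : Fin na → X) (c : Fin nc → X) (y : Fin N → X)
    (ρ : ℝ) (hρ : 0 ≤ ρ)
    (γ : ℝ) (hγ : γ = (na : ℝ) / ((na : ℝ) + nc))
    (β : ℝ) (hβ0 : 0 ≤ β) (hβ1 : β ≤ 1)
    (hβfeas : (β - γ) ^ 2 ≤ 2 * ρ * γ * (1 - γ)) :
    robustW (Fin.append a c) y (fun _ => 1 / ((na : ℝ) + nc)) (fun _ => 1 / (N : ℝ)) ρ 0
      ≤ β * discreteW a y (fun _ => 1 / (na : ℝ)) (fun _ => 1 / (N : ℝ))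
        + (1 - β) * discreteW c y (fun _ => 1 / (nc : ℝ)) (fun _ => 1 / (N : ℝ)) := by
  have hA : (0:ℝ) < na := by exact_mod_cast Nat.lt_of_lt_of_le Nat.zero_lt_one hna
  have hC : (0:ℝ) < nc := by exact_mod_cast Nat.lt_of_lt_of_le Nat.zero_lt_one hnc
  have hNpos : (0:ℝ) < N := by exact_mod_cast Nat.lt_of_lt_of_le Nat.zero_lt_one hN
  have hs : (0:ℝ) < (na : ℝ) + nc := by linarith
  -- probability vectors
  have hq : IsProbVec (fun _ : Fin N => 1 / (N : ℝ)) := by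
    constructor
    · intro i; positivity
    · simp [Finset.sum_const, Finset.card_univ]
      field_simp
  have hpa : IsProbVec (fun _ : Fin na => 1 / (na : ℝ)) := by
    constructor
    · intro i; positivity
    · simp [Finset.sum_const, Finset.card_univ]
      field_simp
  have hpc : IsProbVec (fun _ : Fin nc => 1 / (nc : ℝ)) := by
    constructor
    · intro i; positivity
    · simp [Finset.sum_const, Finset.card_univ]
      field_simp
  have hpX : IsProbVec (fun _ : Fin (na + nc) => 1 / ((na : ℝ) + nc)) := by
    constructor
    · intro i; positivity
    · simp [Finset.sum_const, Finset.card_univ]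
      field_simp
  -- the relaxed marginal
  set pt : Fin (na + nc) → ℝ :=
    Fin.append (fun _ : Fin na => β / na) (fun _ : Fin nc => (1 - β) / nc) with hpt
  have hptprob : IsProbVec pt := by
    constructor
    · intro i
      refine Fin.addCases (fun i => ?_) (fun i => ?_) i
      · rw [hpt, Fin.append_left]; positivity
      · rw [hpt, Fin.append_right]
        have : 0 ≤ 1 - β := by linarith
        positivity
    · rw [hpt, Fin.sum_univ_add]
      simp only [Fin.append_left, Fin.append_right, Finset.sum_const, Finset.card_univ,
        Fintype.card_fin, nsmul_eq_mul]
      field_simp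
      ring
  have hchi : chiSqDiv pt (fun _ : Fin (na + nc) => 1 / ((na : ℝ) + nc)) ≤ ρ := by
    have key : chiSqDiv pt (fun _ : Fin (na + nc) => 1 / ((na : ℝ) + nc))
        = (β - γ) ^ 2 * ((na : ℝ) + nc) ^ 2 / (2 * na * nc) := by
      rw [chiSqDiv, Fin.sum_univ_add]
      simp only [hpt, Fin.append_left, Fin.append_right, Finset.sum_const, Finset.card_univ,
        Fintype.card_fin, nsmul_eq_mul]
      rw [hγ]
      field_simp
      ring
    rw [key]
    rw [div_le_iff₀ (by positivity)]
    have h2 : (β - γ) ^ 2 * ((na : ℝ) + nc) ^ 2 ≤ 2 * ρ * γ * (1 - γ) * ((na : ℝ) + nc) ^ 2 :=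
      mul_le_mul_of_nonneg_right hβfeas (sq_nonneg _)
    have h3 : 2 * ρ * γ * (1 - γ) * ((na : ℝ) + nc) ^ 2 = ρ * (2 * na * nc) := by
      rw [hγ]; field_simp; ring
    linarith
  have hchiq : chiSqDiv (fun _ : Fin N => 1 / (N : ℝ)) (fun _ : Fin N => 1 / (N : ℝ)) ≤ 0 := by
    have hNne : (1 : ℝ) / N ≠ 0 := by positivity
    simp [chiSqDiv, div_self hNne]
    rw [inv_mul_cancel₀ hNpos.ne']
    simp
  -- robustW ≤ discreteW with relaxed marginal
  have step1 : robustW (Fin.append a c) y (fun _ => 1 / ((na : ℝ) + nc))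
      (fun _ => 1 / (N : ℝ)) ρ 0 ≤ discreteW (Fin.append a c) y pt (fun _ => 1 / (N : ℝ)) := by
    apply csInf_le
    · refine ⟨0, fun cst hcst => ?_⟩
      obtain ⟨pt', qt', hpt', hqt', -, -, rfl⟩ := hcst
      exact discreteW_nonneg _ _ hpt' hqt'
    · exact ⟨pt, fun _ => 1 / (N : ℝ), hptprob, hq, hchi, hchiq, rfl⟩
  refine step1.trans ?_
  -- main mixture bound
  apply le_of_forall_pos_le_add
  intro ε hε
  obtain ⟨ca, hca, hcalt⟩ := Real.lt_sInf_add_pos (Wset_nonempty a y hpa hq) hε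
  obtain ⟨cc, hcc, hcclt⟩ := Real.lt_sInf_add_pos (Wset_nonempty c y hpc hq) hε
  obtain ⟨πa, hπa0, hπar, hπac, hcaeq⟩ := hca
  obtain ⟨πc, hπc0, hπcr, hπcc, hcceq⟩ := hcc
  -- mixture coupling
  set π : Fin (na + nc) → Fin N → ℝ :=
    Fin.append (fun i j => β * πa i j) (fun i j => (1 - β) * πc i j) with hπ
  have hmem : β * ca + (1 - β) * cc ∈
      Wset (Fin.append a c) y pt (fun _ => 1 / (N : ℝ)) := by
    refine ⟨π, ?_, ?_, ?_, ?_⟩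
    · intro i j
      refine Fin.addCases (fun i => ?_) (fun i => ?_) i
      · rw [hπ, Fin.append_left]; exact mul_nonneg hβ0 (hπa0 i j)
      · rw [hπ, Fin.append_right]; exact mul_nonneg (by linarith) (hπc0 i j)
    · intro i
      refine Fin.addCases (fun i => ?_) (fun i => ?_) i
      · rw [hπ, hpt]
        simp only [Fin.append_left]
        rw [← Finset.mul_sum, hπar i]
        field_simp
      · rw [hπ, hpt]
        simp only [Fin.append_right]
        rw [← Finset.mul_sum, hπcr i]
        field_simp
    · intro j
      rw [hπ, Fin.sum_univ_add]
      simp only [Fin.append_left, Fin.append_right]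
      rw [← Finset.mul_sum, ← Finset.mul_sum, hπac j, hπcc j]
      ring
    · rw [hπ, Fin.sum_univ_add]
      simp only [Fin.append_left, Fin.append_right]
      rw [hcaeq, hcceq, Finset.mul_sum, Finset.mul_sum]
      congr 1
      · exact Finset.sum_congr rfl fun i _ => by
          rw [Finset.mul_sum]
          exact Finset.sum_congr rfl fun j _ => by ring
      · exact Finset.sum_congr rfl fun i _ => by
          rw [Finset.mul_sum]
          exact Finset.sum_congr rfl fun j _ => by ring
  have hle : discreteW (Fin.append a c) y pt (fun _ => 1 / (N : ℝ)) ≤ β * ca + (1 - β) * cc :=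
    csInf_le (Wset_bddBelow _ _ _ _) hmem
  have h1 : β * ca ≤ β * (discreteW a y (fun _ => 1 / (na : ℝ)) (fun _ => 1 / (N : ℝ)) + ε) :=
    mul_le_mul_of_nonneg_left (le_of_lt hcalt) hβ0
  have h2 : (1 - β) * cc ≤ (1 - β) *
      (discreteW c y (fun _ => 1 / (nc : ℝ)) (fun _ => 1 / (N : ℝ)) + ε) :=
    mul_le_mul_of_nonneg_left (le_of_lt hcclt) (by linarith)
  calc discreteW (Fin.append a c) y pt (fun _ => 1 / (N : ℝ))
      ≤ β * ca + (1 - β) * cc := hle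
    _ ≤ β * (discreteW a y (fun _ => 1 / (na : ℝ)) (fun _ => 1 / (N : ℝ)) + ε)
        + (1 - β) * (discreteW c y (fun _ => 1 / (nc : ℝ)) (fun _ => 1 / (N : ℝ)) + ε) := by
        linarith
    _ = β * discreteW a y (fun _ => 1 / (na : ℝ)) (fun _ => 1 / (N : ℝ))
        + (1 - β) * discreteW c y (fun _ => 1 / (nc : ℝ)) (fun _ => 1 / (N : ℝ)) + ε := by ring
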